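/- arXiv:1110.1686 — 3 statements merged into one kernel-verified Lean document; each statement's English description precedes it below -/
import Mathlib

section
/- Let R be a fusion ring with basis B, faithfully graded by a group G via a surjective grading λ : B → G. If there exists a faithful element X ∈ B (i.e. every Y ∈ B appears in some power Xⁿ), then G is cyclic and its order divides the order of X. -/
open Finset

structure FusionData (B : Type) [Fintype B] [DecidableEq B] where
  one : B
  star : B → B
  N : B → B → B → ℕ
  N_one_left : ∀ X Y : B, N one X Y = if Y = X then 1 else 0
  N_one_right : ∀ X Y : B, N X one Y = if Y = X then 1 else 0
  mult_one : ∀ X Y : B, N X Y one = if Y = star X then 1 else 0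
  star_involutive : ∀ X : B, star (star X) = X
  assoc : ∀ X Y Z W : B, ∑ T : B, N X Y T * N T Z W = ∑ T : B, N Y Z T * N X T W
  frob : ∀ X Y Z : B, N X Y Z = N (star X) Z Y

variable {B : Type} [Fintype B] [DecidableEq B]

/-- Multiplicity of `Y` in the `n`-th tensor power of `X`. -/
def FusionData.powMult (F : FusionData B) (X : B) : ℕ → B → ℕ
  | 0, Y => if Y = F.one then 1 else 0
  | n + 1, Y => ∑ Z : B, F.powMult X n Z * F.N Z X Y

/-- The order of a basis element: least `n ≥ 1` with `1` appearing in `Xⁿ`. -/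
noncomputable def FusionData.ord (F : FusionData B) (X : B) : ℕ :=
  sInf {n : ℕ | 1 ≤ n ∧ 0 < F.powMult X n F.one}

/-- `X` is faithful: every basis element appears in some power of `X`. -/
def FusionData.Faithful (F : FusionData B) (X : B) : Prop :=
  ∀ Y : B, ∃ n : ℕ, 1 ≤ n ∧ 0 < F.powMult X n Y

/-- Multiplicity of `Y` in the product of a list of basis elements. -/
def FusionData.prodMult (F : FusionData B) : List B → B → ℕ
  | [], Y => if Y = F.one then 1 else 0
  | X :: l, Y => ∑ Z : B, F.N X Z Y * FusionData.prodMult F l Z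

/-- A grading of the fusion ring by a group `G`. -/
def FusionData.IsGrading (F : FusionData B) {G : Type} [Group G] (lam : B → G) : Prop :=
  (∀ X : B, lam (F.star X) = (lam X)⁻¹) ∧
  (∀ X Y Z : B, 0 < F.N X Y Z → lam Z = lam X * lam Y)


theorem lam_one_eq {G : Type} [Group G] (F : FusionData B) (lam : B → G)
    (hgr : F.IsGrading lam) : lam F.one = 1 := by
  have h : 0 < F.N F.one F.one F.one := by simp [F.N_one_left]
  have := hgr.2 _ _ _ h
  exact (right_eq_mul.mp this)

theorem lam_pow {G : Type} [Group G] (F : FusionData B) (lam : B → G)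
    (hgr : F.IsGrading lam) (X : B) :
    ∀ n Y, 0 < F.powMult X n Y → lam Y = (lam X) ^ n := by
  intro n
  induction n with
  | zero =>
    intro Y h
    simp only [FusionData.powMult] at h
    split at h
    · subst ‹Y = F.one›; simpa using lam_one_eq F lam hgr
    · omega
  | succ n ih =>
    intro Y h
    simp only [FusionData.powMult] at h
    obtain ⟨Z, _, hZ⟩ := Finset.exists_ne_zero_of_sum_ne_zero h.ne'
    have h1 : 0 < F.powMult X n Z := Nat.pos_of_ne_zero (by
      intro h0; simp [h0] at hZ)
    have h2 : 0 < F.N Z X Y := Nat.pos_of_ne_zero (by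
      intro h0; simp [h0] at hZ)
    rw [hgr.2 _ _ _ h2, ih Z h1, pow_succ]

/-- a faithful basis element forces the grading group to be cyclic of order
dividing the order of the element. -/
theorem grading_group_cyclic_of_faithful {G : Type} [Group G] [Fintype G]
    (F : FusionData B) (lam : B → G) (hgr : F.IsGrading lam)
    (hsurj : Function.Surjective lam) (X : B) (hX : F.Faithful X) :
    IsCyclic G ∧ Fintype.card G ∣ F.ord X := by
  have key := lam_pow F lam hgr X
  have hmem : ∀ g : G, g ∈ Subgroup.zpowers (lam X) := by
    intro g
    obtain ⟨Y, rfl⟩ := hsurj g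
    obtain ⟨n, _, hn⟩ := hX Y
    exact ⟨(n : ℤ), by simp [key n Y hn]⟩
  refine ⟨⟨lam X, hmem⟩, ?_⟩
  have hcard : Fintype.card G = orderOf (lam X) :=
    by rw [← Nat.card_eq_fintype_card]; exact (orderOf_eq_card_of_forall_mem_zpowers hmem).symm
  rw [hcard]
  have hne : {n : ℕ | 1 ≤ n ∧ 0 < F.powMult X n F.one}.Nonempty := by
    obtain ⟨n, hn1, hn2⟩ := hX F.one
    exact ⟨n, hn1, hn2⟩
  have hordmem := Nat.sInf_mem hne
  apply orderOf_dvd_of_pow_eq_one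
  have := key _ _ hordmem.2
  rw [lam_one_eq F lam hgr] at this
  exact this.symm
end

section
/- In a fusion ring with basis B, every nonzero basis element X has finite order, and ord(X) ≤ |B| (the rank). -/
open Finset

variable {B : Type} [Fintype B] [DecidableEq B]

namespace FusionOrdAux

lemma star_inj (F : FusionData B) : Function.Injective F.star :=
  Function.Involutive.injective F.star_involutive

lemma star_one (F : FusionData B) : F.star F.one = F.one := by
  have h2 := F.mult_one F.one F.one
  rw [F.N_one_left] at h2
  simp only [if_pos rfl] at h2
  by_cases h : F.one = F.star F.one
  · exact h.symm
  · rw [if_neg h] at h2; exact absurd h2 one_ne_zero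

/-- cyclic identity, from associativity against the unit. -/
lemma cyc (F : FusionData B) (X Y Z : B) :
    F.N X Y Z = F.N Y (F.star Z) (F.star X) := by
  have h := F.assoc X Y (F.star Z) F.one
  have e1 : ∀ T : B, F.N T (F.star Z) F.one = if T = Z then 1 else 0 := by
    intro T
    rw [F.mult_one]
    by_cases hT : T = Z
    · subst hT; simp
    · rw [if_neg, if_neg hT]
      intro hc
      exact hT (star_inj F hc.symm)
  have e2 : ∀ T : B, F.N X T F.one = if T = F.star X then 1 else 0 := fun T => F.mult_one X T
  calc F.N X Y Z = ∑ T : B, F.N X Y T * F.N T (F.star Z) F.one := by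
        simp only [e1, mul_ite, mul_one, mul_zero, Finset.sum_ite_eq', Finset.mem_univ, if_true]
    _ = ∑ T : B, F.N Y (F.star Z) T * F.N X T F.one := h
    _ = F.N Y (F.star Z) (F.star X) := by
        simp only [e2, mul_ite, mul_one, mul_zero, Finset.sum_ite_eq', Finset.mem_univ, if_true]

/-- transpose identity: `N Z X Y = N Y (X*) Z`. -/
lemma transp (F : FusionData B) (Z X Y : B) :
    F.N Z X Y = F.N Y (F.star X) Z := by
  have h1 := cyc F Z X Y
  have h2 := F.frob X (F.star Y) (F.star Z)
  have h3 := cyc F Y (F.star X) Z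
  rw [h1, h2, h3]

lemma outdeg (F : FusionData B) (Z W : B) : ∃ T, 0 < F.N Z W T := by
  by_contra h
  push_neg at h
  have h0 : ∀ T, F.N Z W T = 0 := fun T => Nat.le_zero.mp (h T)
  have ha := F.assoc Z W (F.star W) Z
  rw [Finset.sum_eq_zero (fun T _ => by rw [h0 T, zero_mul])] at ha
  have hone : 0 < F.N W (F.star W) F.one * F.N Z F.one Z := by
    rw [F.mult_one, F.N_one_right]; simp
  have hpos : 0 < ∑ T : B, F.N W (F.star W) T * F.N Z T Z :=
    lt_of_lt_of_le hone
      (Finset.single_le_sum (f := fun T => F.N W (F.star W) T * F.N Z T Z)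
        (fun _ _ => Nat.zero_le _) (Finset.mem_univ F.one))
  omega

lemma indeg (F : FusionData B) (T W : B) : ∃ Y, 0 < F.N Y T W := by
  obtain ⟨T', hT'⟩ := outdeg F T (F.star W)
  refine ⟨F.star T', ?_⟩
  rw [cyc F (F.star T') T W, F.star_involutive]
  exact hT'

lemma powMult_succ (F : FusionData B) (X : B) (n : ℕ) (Y : B) :
    F.powMult X (n + 1) Y = ∑ Z : B, F.powMult X n Z * F.N Z X Y := rfl

lemma powMult_one_eq (F : FusionData B) (X Y : B) :
    F.powMult X 1 Y = if Y = X then 1 else 0 := by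
  rw [powMult_succ]
  have : ∀ Z : B, F.powMult X 0 Z = if Z = F.one then 1 else 0 := fun _ => rfl
  simp only [this, ite_mul, one_mul, zero_mul]
  rw [Finset.sum_ite_eq' Finset.univ F.one (fun Z => F.N Z X Y)]
  simp [F.N_one_left]

lemma powMult_step (F : FusionData B) (X : B) {n : ℕ} {Z Y : B}
    (h1 : 0 < F.powMult X n Z) (h2 : 0 < F.N Z X Y) :
    0 < F.powMult X (n + 1) Y := by
  rw [powMult_succ]
  exact lt_of_lt_of_le (Nat.mul_pos h1 h2)
    (Finset.single_le_sum (f := fun Z => F.powMult X n Z * F.N Z X Y)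
      (fun _ _ => Nat.zero_le _) (Finset.mem_univ Z))

lemma powMult_split (F : FusionData B) (X : B) {n : ℕ} {Y : B}
    (h : 0 < F.powMult X (n + 1) Y) :
    ∃ Z, 0 < F.powMult X n Z ∧ 0 < F.N Z X Y := by
  rw [powMult_succ] at h
  obtain ⟨Z, _, hZ⟩ := Finset.exists_ne_zero_of_sum_ne_zero (Nat.pos_iff_ne_zero.mp h)
  rw [Nat.mul_ne_zero_iff] at hZ
  exact ⟨Z, Nat.pos_of_ne_zero hZ.1, Nat.pos_of_ne_zero hZ.2⟩

/-- If one appears in some positive power, it appears in a power `≤ card B`. -/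
lemma exists_small (F : FusionData B) (X : B)
    (hex : ∃ n, 1 ≤ n ∧ 0 < F.powMult X n F.one) :
    ∃ n, 1 ≤ n ∧ n ≤ Fintype.card B ∧ 0 < F.powMult X n F.one := by
  classical
  set e : ℕ → Finset B :=
    fun k => Finset.univ.filter (fun Y => ∃ j, 1 ≤ j ∧ j ≤ k ∧ 0 < F.powMult X j Y) with he
  have hmem : ∀ k Y, Y ∈ e k ↔ ∃ j, 1 ≤ j ∧ j ≤ k ∧ 0 < F.powMult X j Y := by
    intro k Y; simp [he]
  have hmono : Monotone e := by
    apply monotone_nat_of_le_succ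
    intro k Y hY
    rw [hmem] at hY ⊢
    obtain ⟨j, h1, h2, h3⟩ := hY
    exact ⟨j, h1, h2.trans (Nat.le_succ k), h3⟩
  have hsucc : ∀ k Y, Y ∈ e (k + 1) ↔ (Y = X ∨ ∃ Z ∈ e k, 0 < F.N Z X Y) := by
    intro k Y
    constructor
    · intro hY
      rw [hmem] at hY
      obtain ⟨j, h1, h2, h3⟩ := hY
      match j, h1 with
      | 1, _ =>
        left
        rw [powMult_one_eq] at h3
        by_cases hYX : Y = X
        · exact hYX
        · rw [if_neg hYX] at h3; omega
      | (j' + 2), _ =>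
        right
        obtain ⟨Z, hZ1, hZ2⟩ := powMult_split F X h3
        refine ⟨Z, ?_, hZ2⟩
        rw [hmem]
        exact ⟨j' + 1, by omega, by omega, hZ1⟩
    · rintro (rfl | ⟨Z, hZ, hN⟩)
      · rw [hmem]
        exact ⟨1, le_refl 1, by omega, by rw [powMult_one_eq]; simp⟩
      · rw [hmem] at hZ ⊢
        obtain ⟨j, h1, h2, h3⟩ := hZ
        exact ⟨j + 1, by omega, by omega, powMult_step F X h3 hN⟩
  have hstab : ∀ k, e k = e (k + 1) → ∀ m, e (k + m) = e k := by
    intro k hk m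
    induction m with
    | zero => rfl
    | succ m ih =>
      have h2 : e (k + m + 1) = e (k + 1) := by
        ext Y
        rw [hsucc, hsucc, ih, hk]
      rw [show k + (m + 1) = k + m + 1 by omega, h2, ← hk]
  have key : ∀ k, (∃ j, j < k ∧ e j = e (j + 1)) ∨ k ≤ (e k).card := by
    intro k
    induction k with
    | zero => right; exact Nat.zero_le _
    | succ k ih =>
      rcases ih with ⟨j, hj, hje⟩ | hcard
      · exact Or.inl ⟨j, hj.trans (Nat.lt_succ_self k), hje⟩
      · by_cases hk : e k = e (k + 1)
        · exact Or.inl ⟨k, Nat.lt_succ_self k, hk⟩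
        · right
          have hss : e k ⊂ e (k + 1) :=
            Finset.ssubset_iff_subset_ne.mpr ⟨hmono (Nat.le_succ k), hk⟩
          have := Finset.card_lt_card hss
          omega
  have hstable : ∃ j, j < Fintype.card B + 1 ∧ e j = e (j + 1) := by
    rcases key (Fintype.card B + 1) with h | h
    · obtain ⟨j, h1, h2⟩ := h
      exact ⟨j, h1, h2⟩
    · exfalso
      have h2 := Finset.card_le_univ (e (Fintype.card B + 1))
      have h3 : (Finset.univ : Finset B).card = Fintype.card B := Finset.card_univ
      omega
  obtain ⟨j, hjlt, hje⟩ := hstable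
  have hsub : ∀ m, e m ⊆ e j := by
    intro m
    rcases le_or_gt m j with h | h
    · exact hmono h
    · rw [show m = j + (m - j) by omega, hstab j hje (m - j)]
  obtain ⟨n, hn1, hnQ⟩ := hex
  have hone : F.one ∈ e j := hsub n ((hmem n F.one).mpr ⟨n, hn1, le_refl n, hnQ⟩)
  rw [hmem] at hone
  obtain ⟨i, hi1, hi2, hi3⟩ := hone
  exact ⟨i, hi1, by omega, hi3⟩

/-- A symmetric real matrix with entries ≥ 1 has a strictly positive eigenvector. -/
lemma exists_pos_eigen [Nonempty B] (M : Matrix B B ℝ)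
    (h1 : ∀ i j, (1 : ℝ) ≤ M i j) (hsym : M.IsHermitian) :
    ∃ (c : ℝ) (u : B → ℝ), (∀ i, 0 < u i) ∧ M.mulVec u = c • u := by
  classical
  set T : EuclideanSpace ℝ B →L[ℝ] EuclideanSpace ℝ B :=
    LinearMap.toContinuousLinearMap (Matrix.toEuclideanLin M) with hT
  have hTapp : ∀ (x : EuclideanSpace ℝ B) (i : B), T x i = M.mulVec x i := fun x i => rfl
  have hsa : IsSelfAdjoint T := by
    rw [ContinuousLinearMap.isSelfAdjoint_iff_isSymmetric]
    have h := (Matrix.isHermitian_iff_isSymmetric).mp hsym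
    simpa [hT] using h
  have hform : ∀ x : EuclideanSpace ℝ B,
      T.reApplyInnerSelf x = ∑ i, ∑ j, M i j * x j * x i := by
    intro x
    rw [ContinuousLinearMap.reApplyInnerSelf_apply]
    rw [PiLp.inner_apply]
    simp only [RCLike.inner_apply, conj_trivial, RCLike.re_to_real]
    apply Finset.sum_congr rfl
    intro i _
    rw [hTapp x i]
    rw [Matrix.mulVec, dotProduct, mul_comm (x i), Finset.sum_mul]
  obtain ⟨i0⟩ := (inferInstance : Nonempty B)
  set z : EuclideanSpace ℝ B := EuclideanSpace.single i0 (1 : ℝ) with hz0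
  have hz : z ∈ Metric.sphere (0 : EuclideanSpace ℝ B) 1 := by
    simp [hz0, EuclideanSpace.norm_single]
  obtain ⟨x₀, hx₀mem, hmax⟩ := (isCompact_sphere (0 : EuclideanSpace ℝ B) 1).exists_isMaxOn
    ⟨z, hz⟩ (T.reApplyInnerSelf_continuous.continuousOn)
  have hx₀norm : ‖x₀‖ = 1 := by simpa using hx₀mem
  set y : EuclideanSpace ℝ B := (WithLp.equiv 2 (B → ℝ)).symm (fun i => |x₀ i|) with hy
  have hyi : ∀ i, y i = |x₀ i| := fun i => rfl
  have hynorm : ‖y‖ = 1 := by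
    rw [EuclideanSpace.norm_eq] at hx₀norm ⊢
    simp only [hyi, Real.norm_eq_abs, abs_abs]
    exact hx₀norm
  have hy0 : y ≠ 0 := by
    intro h
    rw [h, norm_zero] at hynorm
    exact one_ne_zero hynorm.symm
  have hymem : y ∈ Metric.sphere (0 : EuclideanSpace ℝ B) 1 := by
    simpa using hynorm
  have hmax' : IsMaxOn T.reApplyInnerSelf (Metric.sphere (0 : EuclideanSpace ℝ B) 1) y := by
    intro w hw
    have hA : T.reApplyInnerSelf w ≤ T.reApplyInnerSelf x₀ := hmax hw
    have hB : T.reApplyInnerSelf x₀ ≤ T.reApplyInnerSelf y := by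
      rw [hform, hform]
      apply Finset.sum_le_sum
      intro i _
      apply Finset.sum_le_sum
      intro j _
      have hMnn : (0 : ℝ) ≤ M i j := le_trans zero_le_one (h1 i j)
      calc M i j * x₀ j * x₀ i ≤ |M i j * x₀ j * x₀ i| := le_abs_self _
        _ = M i j * |x₀ j| * |x₀ i| := by
            rw [abs_mul, abs_mul, abs_of_nonneg hMnn]
        _ = M i j * y j * y i := by rw [hyi, hyi]
    exact le_trans hA hB
  have hextr : IsLocalExtrOn T.reApplyInnerSelf
      (Metric.sphere (0 : EuclideanSpace ℝ B) ‖y‖) y := by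
    rw [hynorm]
    exact Or.inr hmax'.localize
  have heig := hsa.eq_smul_self_of_isLocalExtrOn hextr
  set c : ℝ := T.rayleighQuotient y with hc
  set u : B → ℝ := fun i => |x₀ i| with hu
  have hMu : M.mulVec u = c • u := by
    funext i
    have := congrArg (fun v : EuclideanSpace ℝ B => v i) heig
    exact this
  have husum : 0 < ∑ i, u i := by
    have hex : ∃ i, u i ≠ 0 := by
      by_contra h
      push_neg at h
      apply hy0
      have : y = (WithLp.equiv 2 (B → ℝ)).symm (fun _ => 0) := by
        rw [hy]
        congr 1
        funext i
        exact h i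
      rw [this]
      rfl
    obtain ⟨iw, hiw⟩ := hex
    apply Finset.sum_pos'
    · intro i _; exact abs_nonneg _
    · exact ⟨iw, Finset.mem_univ iw, lt_of_le_of_ne (abs_nonneg _) (Ne.symm hiw)⟩
  have hui : ∀ i, 0 < u i := by
    intro i
    have hpos : 0 < M.mulVec u i := by
      have heq' : M.mulVec u i = ∑ j, M i j * u j := by
        rw [Matrix.mulVec, dotProduct]
      rw [heq']
      calc (0 : ℝ) < ∑ j, u j := husum
        _ ≤ ∑ j, M i j * u j :=
          Finset.sum_le_sum fun j _ => le_mul_of_one_le_left (abs_nonneg _) (h1 i j)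
    rw [hMu] at hpos
    have hceq : (c • u) i = c * u i := rfl
    by_contra hle
    push_neg at hle
    have h0 : u i = 0 := le_antisymm hle (abs_nonneg _)
    rw [hceq, h0, mul_zero] at hpos
    exact lt_irrefl 0 hpos
  exact ⟨c, u, hui, hMu⟩

/-- Perron-Frobenius uniqueness: two positive eigenvectors for the same eigenvalue of a
matrix with entries ≥ 1 are collinear. -/
lemma eigen_collinear [Nonempty B] (M : Matrix B B ℝ) (h1 : ∀ i j, (1 : ℝ) ≤ M i j)
    {c : ℝ} {u w : B → ℝ} (hu : ∀ i, 0 < u i) (hw : ∀ i, 0 < w i)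
    (hMu : M.mulVec u = c • u) (hMw : M.mulVec w = c • w) :
    ∃ t : ℝ, 0 < t ∧ w = t • u := by
  classical
  obtain ⟨i0, -, hi0⟩ := Finset.exists_min_image Finset.univ (fun i => w i / u i)
    ⟨Classical.arbitrary B, Finset.mem_univ _⟩
  set t : ℝ := w i0 / u i0 with htdef
  have ht : 0 < t := div_pos (hw i0) (hu i0)
  set v : B → ℝ := fun i => w i - t * u i with hv
  have hv0 : ∀ i, 0 ≤ v i := by
    intro i
    have h := hi0 i (Finset.mem_univ i)
    have h2 := (le_div_iff₀ (hu i)).mp h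
    simp only [hv]
    linarith
  have hvi0 : v i0 = 0 := by
    have h2 : t * u i0 = w i0 := by
      rw [htdef, div_mul_cancel₀ (w i0) (ne_of_gt (hu i0))]
    simp only [hv]
    linarith
  have hMv : M.mulVec v = c • v := by
    have hveq : v = w - t • u := by
      funext i
      simp only [hv, Pi.sub_apply, Pi.smul_apply, smul_eq_mul]
    rw [hveq, Matrix.mulVec_sub, Matrix.mulVec_smul, hMu, hMw]
    funext i
    simp only [Pi.sub_apply, Pi.smul_apply, smul_eq_mul]
    ring
  by_cases hz : ∀ i, v i = 0
  · refine ⟨t, ht, funext fun i => ?_⟩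
    have h3 := hz i
    simp only [hv] at h3
    simp only [Pi.smul_apply, smul_eq_mul]
    linarith
  · exfalso
    push_neg at hz
    obtain ⟨j0, hj0⟩ := hz
    have hj0' : 0 < v j0 := lt_of_le_of_ne (hv0 j0) (Ne.symm hj0)
    have hp : 0 < M.mulVec v i0 := by
      have heq' : M.mulVec v i0 = ∑ j, M i0 j * v j := by
        rw [Matrix.mulVec, dotProduct]
      rw [heq']
      have hterm : 0 < M i0 j0 * v j0 :=
        mul_pos (lt_of_lt_of_le one_pos (h1 i0 j0)) hj0'
      refine lt_of_lt_of_le hterm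
        (Finset.single_le_sum (f := fun j => M i0 j * v j) ?_ (Finset.mem_univ j0))
      intro j _
      exact mul_nonneg (le_trans zero_le_one (h1 i0 j)) (hv0 j)
    rw [hMv] at hp
    have hcv : (c • v) i0 = c * v i0 := rfl
    rw [hcv, hvi0, mul_zero] at hp
    exact lt_irrefl 0 hp

end FusionOrdAux

/-- every basis element has finite order, bounded by the rank. -/
theorem ord_le_rank (F : FusionData B) (X : B) :
    0 < F.powMult X (F.ord X) F.one ∧ 1 ≤ F.ord X ∧ F.ord X ≤ Fintype.card B := by
  classical
  haveI : Nonempty B := ⟨F.one⟩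
  have hex : ∃ n, 1 ≤ n ∧ 0 < F.powMult X n F.one := by
    by_contra hcon
    push_neg at hcon
    set Fs : Finset B := Finset.univ.filter (fun Y => ∃ n, 1 ≤ n ∧ 0 < F.powMult X n Y) with hFs
    have hXF : X ∈ Fs := by
      rw [hFs, Finset.mem_filter]
      exact ⟨Finset.mem_univ _, 1, le_refl 1, by rw [FusionOrdAux.powMult_one_eq]; simp⟩
    have honeF : F.one ∉ Fs := by
      rw [hFs, Finset.mem_filter]
      rintro ⟨-, n, hn1, hn2⟩
      exact absurd hn2 (not_lt.mpr (hcon n hn1))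
    have hclosed : ∀ Z, Z ∈ Fs → ∀ Y, 0 < F.N Z X Y → Y ∈ Fs := by
      intro Z hZ Y hN
      rw [hFs, Finset.mem_filter] at hZ ⊢
      obtain ⟨-, n, hn1, hn2⟩ := hZ
      exact ⟨Finset.mem_univ _, n + 1, by omega, FusionOrdAux.powMult_step F X hn2 hN⟩
    have hvanishN : ∀ Z, Z ∈ Fs → ∀ Y, Y ∉ Fs → F.N Z X Y = 0 := by
      intro Z hZ Y hY
      by_contra h
      exact hY (hclosed Z hZ Y (Nat.pos_of_ne_zero h))
    set M : Matrix B B ℝ := fun T W => ∑ Y : B, (F.N Y T W : ℝ) with hM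
    have hM1 : ∀ T W, (1 : ℝ) ≤ M T W := by
      intro T W
      obtain ⟨Y0, hY0⟩ := FusionOrdAux.indeg F T W
      have h2 : (1 : ℝ) ≤ (F.N Y0 T W : ℝ) := by exact_mod_cast hY0
      have h3 : (F.N Y0 T W : ℝ) ≤ ∑ Y : B, (F.N Y T W : ℝ) :=
        Finset.single_le_sum (f := fun Y => (F.N Y T W : ℝ))
          (fun Y _ => Nat.cast_nonneg _) (Finset.mem_univ Y0)
      exact le_trans h2 h3
    have hMsym : M.IsHermitian := by
      show M.conjTranspose = M
      ext i j
      rw [Matrix.conjTranspose_apply]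
      simp only [Matrix.conjTranspose_apply, hM, star_trivial]
      rw [← Equiv.sum_comp (Function.Involutive.toPerm F.star F.star_involutive)
          (fun Y => (F.N Y j i : ℝ))]
      apply Finset.sum_congr rfl
      intro Y _
      have h := F.frob Y i j
      rw [show (Function.Involutive.toPerm F.star F.star_involutive) Y = F.star Y from rfl]
      exact_mod_cast h.symm
    obtain ⟨c, u, hupos, hMu⟩ := FusionOrdAux.exists_pos_eigen M hM1 hMsym
    set R : Matrix B B ℝ := fun Z Y => (F.N Z X Y : ℝ) with hR
    set R' : Matrix B B ℝ := fun Z Y => (F.N Z (F.star X) Y : ℝ) with hR'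
    have hcomm : ∀ (W : B) (Rm : Matrix B B ℝ), (∀ Z Y, Rm Z Y = (F.N Z W Y : ℝ)) →
        M * Rm = Rm * M := by
      intro W Rm hRm
      ext T W'
      rw [Matrix.mul_apply, Matrix.mul_apply]
      have natkey : ∑ V : B, (∑ Y : B, F.N Y T V) * F.N V W W'
          = ∑ V : B, F.N T W V * (∑ Y : B, F.N Y V W') := by
        calc ∑ V : B, (∑ Y : B, F.N Y T V) * F.N V W W'
            = ∑ V : B, ∑ Y : B, F.N Y T V * F.N V W W' := by
              simp_rw [Finset.sum_mul]
          _ = ∑ Y : B, ∑ V : B, F.N Y T V * F.N V W W' := Finset.sum_comm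
          _ = ∑ Y : B, ∑ V : B, F.N T W V * F.N Y V W' :=
              Finset.sum_congr rfl fun Y _ => F.assoc Y T W W'
          _ = ∑ V : B, ∑ Y : B, F.N T W V * F.N Y V W' := Finset.sum_comm
          _ = ∑ V : B, F.N T W V * (∑ Y : B, F.N Y V W') := by
              simp_rw [Finset.mul_sum]
      simp only [hRm, hM]
      exact_mod_cast natkey
    have hformR : ∀ Z, (R.mulVec u) Z = ∑ Y : B, (F.N Z X Y : ℝ) * u Y := by
      intro Z
      rw [Matrix.mulVec, dotProduct]
    have hformR' : ∀ Y, (R'.mulVec u) Y = ∑ Z : B, (F.N Z X Y : ℝ) * u Z := by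
      intro Y
      rw [Matrix.mulVec, dotProduct]
      apply Finset.sum_congr rfl
      intro Z _
      have hYZ : R' Y Z = (F.N Z X Y : ℝ) := by
        simp only [hR']
        exact_mod_cast (FusionOrdAux.transp F Z X Y).symm
      rw [hYZ]
    have hRupos : ∀ Z, 0 < (R.mulVec u) Z := by
      intro Z
      obtain ⟨T0, hT0⟩ := FusionOrdAux.outdeg F Z X
      rw [hformR Z]
      have hterm : 0 < (F.N Z X T0 : ℝ) * u T0 :=
        mul_pos (by exact_mod_cast hT0) (hupos T0)
      exact lt_of_lt_of_le hterm
        (Finset.single_le_sum (f := fun Y => (F.N Z X Y : ℝ) * u Y)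
          (fun Y _ => mul_nonneg (Nat.cast_nonneg _) (le_of_lt (hupos Y)))
          (Finset.mem_univ T0))
    have hR'upos : ∀ Y, 0 < (R'.mulVec u) Y := by
      intro Y
      obtain ⟨T0, hT0⟩ := FusionOrdAux.indeg F X Y
      rw [hformR' Y]
      have hterm : 0 < (F.N T0 X Y : ℝ) * u T0 :=
        mul_pos (by exact_mod_cast hT0) (hupos T0)
      exact lt_of_lt_of_le hterm
        (Finset.single_le_sum (f := fun Z => (F.N Z X Y : ℝ) * u Z)
          (fun Z _ => mul_nonneg (Nat.cast_nonneg _) (le_of_lt (hupos Z)))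
          (Finset.mem_univ T0))
    have hMRu : M.mulVec (R.mulVec u) = c • (R.mulVec u) := by
      rw [Matrix.mulVec_mulVec, hcomm X R (fun _ _ => rfl), ← Matrix.mulVec_mulVec, hMu,
        Matrix.mulVec_smul]
    have hMR'u : M.mulVec (R'.mulVec u) = c • (R'.mulVec u) := by
      rw [Matrix.mulVec_mulVec, hcomm (F.star X) R' (fun _ _ => rfl), ← Matrix.mulVec_mulVec,
        hMu, Matrix.mulVec_smul]
    obtain ⟨t, ht, hRu⟩ := FusionOrdAux.eigen_collinear M hM1 hupos hRupos hMu hMRu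
    obtain ⟨t', ht', hR'u⟩ := FusionOrdAux.eigen_collinear M hM1 hupos hR'upos hMu hMR'u
    have hSpos : 0 < ∑ i, u i * u i :=
      Finset.sum_pos (fun i _ => mul_pos (hupos i) (hupos i)) Finset.univ_nonempty
    have hsum1 : ∑ i, u i * (R.mulVec u) i = t * ∑ i, u i * u i := by
      rw [hRu, Finset.mul_sum]
      exact Finset.sum_congr rfl fun i _ => by
        simp only [Pi.smul_apply, smul_eq_mul]; ring
    have hsum2 : ∑ i, u i * (R'.mulVec u) i = t' * ∑ i, u i * u i := by
      rw [hR'u, Finset.mul_sum]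
      exact Finset.sum_congr rfl fun i _ => by
        simp only [Pi.smul_apply, smul_eq_mul]; ring
    have hswap : ∑ i, u i * (R.mulVec u) i = ∑ i, u i * (R'.mulVec u) i := by
      have l1 : ∑ i, u i * (R.mulVec u) i = ∑ i : B, ∑ j : B, u i * ((F.N i X j : ℝ) * u j) :=
        Finset.sum_congr rfl fun i _ => by rw [hformR i, Finset.mul_sum]
      have l2 : ∑ i, u i * (R'.mulVec u) i = ∑ i : B, ∑ j : B, u i * ((F.N j X i : ℝ) * u j) :=
        Finset.sum_congr rfl fun i _ => by rw [hformR' i, Finset.mul_sum]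
      rw [l1, l2, Finset.sum_comm]
      exact Finset.sum_congr rfl fun i _ => Finset.sum_congr rfl fun j _ => by ring
    have htt' : t = t' := by
      have h := hsum1.symm.trans (hswap.trans hsum2)
      exact mul_right_cancel₀ (ne_of_gt hSpos) h
    -- flow balance over Fs
    have hA1 : ∑ Z ∈ Fs, u Z * (R.mulVec u) Z = t * ∑ Z ∈ Fs, u Z * u Z := by
      rw [hRu, Finset.mul_sum]
      exact Finset.sum_congr rfl fun i _ => by
        simp only [Pi.smul_apply, smul_eq_mul]; ring
    have hA1' : ∑ Z ∈ Fs, u Z * (R.mulVec u) Z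
        = ∑ Z ∈ Fs, ∑ Y ∈ Fs, u Z * (F.N Z X Y : ℝ) * u Y := by
      apply Finset.sum_congr rfl
      intro Z hZ
      calc u Z * (R.mulVec u) Z = ∑ Y : B, u Z * (F.N Z X Y : ℝ) * u Y := by
            rw [hformR Z, Finset.mul_sum]
            exact Finset.sum_congr rfl fun Y _ => by ring
        _ = ∑ Y ∈ Fs, u Z * (F.N Z X Y : ℝ) * u Y := by
            refine (Finset.sum_subset (Finset.subset_univ Fs) ?_).symm
            intro Y _ hY
            rw [hvanishN Z hZ Y hY]
            simp
    have hA2 : ∑ Y ∈ Fs, u Y * (R'.mulVec u) Y = t * ∑ Y ∈ Fs, u Y * u Y := by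
      rw [hR'u, ← htt', Finset.mul_sum]
      exact Finset.sum_congr rfl fun i _ => by
        simp only [Pi.smul_apply, smul_eq_mul]; ring
    have hA2' : (∑ Z ∈ Fs, ∑ Y ∈ Fs, u Z * (F.N Z X Y : ℝ) * u Y) + u X * u F.one
        ≤ ∑ Y ∈ Fs, u Y * (R'.mulVec u) Y := by
      have hsplit : ∀ Y, ∑ Z : B, u Y * ((F.N Z X Y : ℝ) * u Z)
          = (∑ Z ∈ Fs, u Y * ((F.N Z X Y : ℝ) * u Z))
            + ∑ Z ∈ Finset.univ \ Fs, u Y * ((F.N Z X Y : ℝ) * u Z) := by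
        intro Y
        rw [← Finset.sum_sdiff (Finset.subset_univ Fs), add_comm]
      have hstep : ∑ Y ∈ Fs, u Y * (R'.mulVec u) Y
          = (∑ Y ∈ Fs, ∑ Z ∈ Fs, u Y * ((F.N Z X Y : ℝ) * u Z))
            + ∑ Y ∈ Fs, ∑ Z ∈ Finset.univ \ Fs, u Y * ((F.N Z X Y : ℝ) * u Z) := by
        rw [← Finset.sum_add_distrib]
        apply Finset.sum_congr rfl
        intro Y _
        rw [hformR' Y, Finset.mul_sum, hsplit Y]
      have heqD : ∑ Y ∈ Fs, ∑ Z ∈ Fs, u Y * ((F.N Z X Y : ℝ) * u Z)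
          = ∑ Z ∈ Fs, ∑ Y ∈ Fs, u Z * (F.N Z X Y : ℝ) * u Y := by
        rw [Finset.sum_comm]
        exact Finset.sum_congr rfl fun Z _ => Finset.sum_congr rfl fun Y _ => by ring
      have honemem : F.one ∈ Finset.univ \ Fs :=
        Finset.mem_sdiff.mpr ⟨Finset.mem_univ _, honeF⟩
      have hinner : u X * u F.one ≤ ∑ Z ∈ Finset.univ \ Fs, u X * ((F.N Z X X : ℝ) * u Z) := by
        have hval : u X * ((F.N F.one X X : ℝ) * u F.one) = u X * u F.one := by
          rw [F.N_one_left]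
          simp
        rw [← hval]
        refine Finset.single_le_sum (f := fun Z => u X * ((F.N Z X X : ℝ) * u Z)) ?_ honemem
        intro Z _
        exact mul_nonneg (le_of_lt (hupos X))
          (mul_nonneg (Nat.cast_nonneg _) (le_of_lt (hupos Z)))
      have hE : u X * u F.one
          ≤ ∑ Y ∈ Fs, ∑ Z ∈ Finset.univ \ Fs, u Y * ((F.N Z X Y : ℝ) * u Z) := by
        refine le_trans hinner
          (Finset.single_le_sum
            (f := fun Y => ∑ Z ∈ Finset.univ \ Fs, u Y * ((F.N Z X Y : ℝ) * u Z)) ?_ hXF)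
        intro Y _
        refine Finset.sum_nonneg fun Z _ => ?_
        exact mul_nonneg (le_of_lt (hupos Y))
          (mul_nonneg (Nat.cast_nonneg _) (le_of_lt (hupos Z)))
      rw [hstep, heqD]
      exact (add_le_add_iff_left _).mpr hE
    have hpos : 0 < u X * u F.one := mul_pos (hupos X) (hupos F.one)
    rw [hA2, ← hA1, hA1'] at hA2'
    linarith
  obtain ⟨m, hm1, hmcard, hmQ⟩ := FusionOrdAux.exists_small F X hex
  have hne : {n : ℕ | 1 ≤ n ∧ 0 < F.powMult X n F.one}.Nonempty := ⟨m, hm1, hmQ⟩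
  have hdef : F.ord X = sInf {n : ℕ | 1 ≤ n ∧ 0 < F.powMult X n F.one} := rfl
  have hmemS := Nat.sInf_mem hne
  have hle : sInf {n : ℕ | 1 ≤ n ∧ 0 < F.powMult X n F.one} ≤ m := Nat.sInf_le ⟨hm1, hmQ⟩
  rw [hdef]
  exact ⟨hmemS.2, hmemS.1, le_trans hle hmcard⟩
end

section
/- Let G be a finite nilpotent group whose center Z(G) is cyclic. Then G has a faithful irreducible complex character. -/
open CategoryTheory Module

section AuxGroup

open Subgroup

/-- In a nilpotent group, every nontrivial normal subgroup meets the center nontrivially. -/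
theorem aux_meets_center {G : Type} [Group G] (hnil : Group.IsNilpotent G)
    (N : Subgroup G) (hnorm : N.Normal) (hN : N ≠ ⊥) :
    ∃ x : G, x ∈ N ∧ x ∈ Subgroup.center G ∧ x ≠ 1 := by
  obtain ⟨n, hn⟩ := hnil.nilpotent
  have hex : ∃ m, N ⊓ Subgroup.upperCentralSeries G m ≠ ⊥ := ⟨n, by rw [hn, inf_top_eq]; exact hN⟩
  classical
  let m := Nat.find hex
  have hm : N ⊓ Subgroup.upperCentralSeries G m ≠ ⊥ := Nat.find_spec hex
  have hm0 : m ≠ 0 := by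
    intro h
    apply hm
    rw [h, Subgroup.upperCentralSeries_zero, inf_bot_eq]
  obtain ⟨m', hm'⟩ : ∃ m', m = m' + 1 :=
    ⟨m - 1, (Nat.succ_pred_eq_of_pos (Nat.pos_of_ne_zero hm0)).symm⟩
  rw [hm'] at hm
  have hmin : N ⊓ Subgroup.upperCentralSeries G m' = ⊥ := by
    by_contra h
    exact Nat.find_min hex (by omega) h
  obtain ⟨x, hxmem, hx1⟩ : ∃ x, x ∈ N ⊓ Subgroup.upperCentralSeries G (m' + 1) ∧ x ≠ 1 := by
    by_contra h
    push_neg at h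
    exact hm ((Subgroup.eq_bot_iff_forall _).2 fun x hx => by
      by_contra hne; exact hne (by_contra fun hne2 => hne2 (h x hx)))
  refine ⟨x, hxmem.1, Subgroup.mem_center_iff.2 fun g => ?_, hx1⟩
  have hc : x * g * x⁻¹ * g⁻¹ ∈ Subgroup.upperCentralSeries G m' :=
    (Subgroup.mem_upperCentralSeries_succ_iff).1 hxmem.2 g
  have hcN : x * g * x⁻¹ * g⁻¹ ∈ N := by
    have h1 : g * x⁻¹ * g⁻¹ ∈ N := hnorm.conj_mem _ (N.inv_mem hxmem.1) g
    have := N.mul_mem hxmem.1 h1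
    simpa [mul_assoc] using this
  have : x * g * x⁻¹ * g⁻¹ = 1 := by
    have := hmin ▸ (Subgroup.mem_inf.2 ⟨hcN, hc⟩)
    simpa using this
  have h3 : x * g * x⁻¹ = g := by
    have := mul_inv_eq_one.1 this
    simpa using this
  calc g * x = (x * g * x⁻¹) * x := by rw [h3]
    _ = x * g := by group

end AuxGroup

section RepAux

variable {G : Type} [Group G] {V : Type} [AddCommGroup V] [Module ℂ V]

/-- invariance of a submodule under a representation -/
def IsInvt (ρ : Representation ℂ G V) (p : Submodule ℂ V) : Prop :=
  ∀ (g : G), ∀ v ∈ p, ρ g v ∈ p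

/-- restriction of a representation to an invariant submodule -/
def resRep (ρ : Representation ℂ G V) (p : Submodule ℂ V) (h : IsInvt ρ p) :
    Representation ℂ G p where
  toFun g := (ρ g).restrict (h g)
  map_one' := by ext v; simp [LinearMap.restrict_apply]
  map_mul' g g' := by ext v; simp [LinearMap.restrict_apply]

@[simp] theorem resRep_apply (ρ : Representation ℂ G V) (p : Submodule ℂ V) (h : IsInvt ρ p)
    (g : G) (v : p) : (resRep ρ p h g v : V) = ρ g v := rfl

/-- irreducibility of a representation -/
def Irred (ρ : Representation ℂ G V) : Prop :=
  Nontrivial V ∧ ∀ p : Submodule ℂ V, IsInvt ρ p → p = ⊥ ∨ p = ⊤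

/-- Maschke's theorem in invariant-submodule language. -/
theorem maschke_invt [Fintype G] (ρ : Representation ℂ G V) (p : Submodule ℂ V)
    (hp : IsInvt ρ p) : ∃ q, IsInvt ρ q ∧ p ⊓ q = ⊥ ∧ p ⊔ q = ⊤ := by
  obtain ⟨c, hc⟩ := Submodule.exists_isCompl p
  let π₀ : V →ₗ[ℂ] V := p.subtype ∘ₗ Submodule.projectionOnto p c hc
  have hπ₀mem : ∀ v, π₀ v ∈ p := fun v => (Submodule.projectionOnto p c hc v).2
  have hπ₀id : ∀ v ∈ p, π₀ v = v := fun v hv => by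
    simp [π₀, Submodule.projectionOnto_apply_left hc ⟨v, hv⟩]
  let π : V →ₗ[ℂ] V :=
    (Fintype.card G : ℂ)⁻¹ • ∑ g : G, ρ g ∘ₗ π₀ ∘ₗ ρ g⁻¹
  have hπmem : ∀ v, π v ∈ p := by
    intro v
    simp only [π, LinearMap.smul_apply, LinearMap.sum_apply, LinearMap.comp_apply]
    exact Submodule.smul_mem _ _ (Submodule.sum_mem _ fun g _ => hp g _ (hπ₀mem _))
  have hcard : (Fintype.card G : ℂ) ≠ 0 := by
    exact_mod_cast Nat.cast_ne_zero.2 Fintype.card_ne_zero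
  have hπid : ∀ v ∈ p, π v = v := by
    intro v hv
    have : ∀ g : G, (ρ g ∘ₗ π₀ ∘ₗ ρ g⁻¹) v = v := by
      intro g
      have h1 : ρ g⁻¹ v ∈ p := hp g⁻¹ v hv
      simp only [LinearMap.comp_apply, hπ₀id _ h1]
      rw [← Module.End.mul_apply, ← map_mul, mul_inv_cancel, map_one, Module.End.one_apply]
    simp only [π, LinearMap.smul_apply, LinearMap.sum_apply, this, Finset.sum_const,
      Finset.card_univ, ← Nat.cast_smul_eq_nsmul ℂ, smul_smul, inv_mul_cancel₀ hcard, one_smul]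
  have hπcomm : ∀ (g : G) (v : V), π (ρ g v) = ρ g (π v) := by
    intro g v
    simp only [π, LinearMap.smul_apply, LinearMap.sum_apply, LinearMap.comp_apply]
    rw [map_smul, map_sum]
    congr 1
    refine Fintype.sum_bijective (fun h => g⁻¹ * h) (Group.mulLeft_bijective g⁻¹) _ _ fun h => ?_
    have e1 : ρ h⁻¹ (ρ g v) = ρ ((g⁻¹ * h)⁻¹) v := by
      rw [← Module.End.mul_apply, ← map_mul]; congr 1; group
    have e2 : ∀ x, ρ g (ρ (g⁻¹ * h) x) = ρ h x := fun x => by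
      rw [← Module.End.mul_apply, ← map_mul, show g * (g⁻¹ * h) = h by group]
    rw [e1, e2]
  refine ⟨LinearMap.ker π, ?_, ?_, ?_⟩
  · intro g v hv
    rw [LinearMap.mem_ker] at hv ⊢
    rw [hπcomm, hv, map_zero]
  · rw [eq_bot_iff]
    rintro v ⟨hv1, hv2⟩
    have : π v = 0 := hv2
    rw [hπid v hv1] at this
    simp [this]
  · rw [eq_top_iff]
    intro v _
    have hsplit : v = π v + (v - π v) := by abel
    have h2 : v - π v ∈ LinearMap.ker π := by
      rw [LinearMap.mem_ker, map_sub, hπid _ (hπmem v), sub_self]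
    exact hsplit ▸ Submodule.add_mem_sup (hπmem v) h2

/-- every nonzero invariant submodule contains an irreducible subrepresentation -/
theorem exists_irred_sub [FiniteDimensional ℂ V] (ρ : Representation ℂ G V)
    (q : Submodule ℂ V) (hq : IsInvt ρ q) (hq0 : q ≠ ⊥) :
    ∃ (p : Submodule ℂ V) (hp : IsInvt ρ p), p ≤ q ∧ p ≠ ⊥ ∧ Irred (resRep ρ p hp) := by
  classical
  have hex : ∃ m, ∃ (p : Submodule ℂ V), IsInvt ρ p ∧ p ≤ q ∧ p ≠ ⊥ ∧ finrank ℂ p = m :=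
    ⟨finrank ℂ q, q, hq, le_rfl, hq0, rfl⟩
  obtain ⟨p, hpI, hpq, hp0, hpm⟩ := Nat.find_spec hex
  refine ⟨p, hpI, hpq, hp0, Submodule.nontrivial_iff_ne_bot.2 hp0, ?_⟩
  intro p' hp'
  by_cases h0 : p' = ⊥
  · exact Or.inl h0
  right
  have hmapI : IsInvt ρ (p'.map p.subtype) := by
    rintro g v ⟨w, hw, rfl⟩
    exact ⟨resRep ρ p hpI g w, hp' g w hw, rfl⟩
  have hmapne : p'.map p.subtype ≠ ⊥ := by
    obtain ⟨w, hw, hwne⟩ := Submodule.exists_mem_ne_zero_of_ne_bot h0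
    intro hbot
    have : (w : V) ∈ p'.map p.subtype := ⟨w, hw, rfl⟩
    rw [hbot, Submodule.mem_bot] at this
    exact hwne (Subtype.ext this)
  have hmaple : p'.map p.subtype ≤ q := le_trans (Submodule.map_subtype_le p p') hpq
  have hge : finrank ℂ p ≤ finrank ℂ (p'.map p.subtype) := by
    have := Nat.find_min' hex ⟨p'.map p.subtype, hmapI, hmaple, hmapne, rfl⟩
    omega
  have heq : finrank ℂ (p'.map p.subtype) = finrank ℂ p' :=
    Submodule.finrank_map_subtype_eq p p'
  have hle : finrank ℂ p' ≤ finrank ℂ p := Submodule.finrank_le p'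
  exact Submodule.eq_top_of_finrank_eq (le_antisymm hle (by omega))

/-- Schur: an equivariant endomorphism of an irreducible representation is scalar -/
theorem schur_scalar [FiniteDimensional ℂ V] (ρ : Representation ℂ G V) (hirr : Irred ρ)
    (f : V →ₗ[ℂ] V) (hf : ∀ (g : G) (v : V), f (ρ g v) = ρ g (f v)) :
    ∃ c : ℂ, f = c • LinearMap.id := by
  haveI := hirr.1
  obtain ⟨c, hc⟩ := Module.End.exists_eigenvalue f
  obtain ⟨v, hv⟩ := hc.exists_hasEigenvector
  refine ⟨c, ?_⟩
  have hker : IsInvt ρ (LinearMap.ker (f - c • LinearMap.id)) := by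
    intro g w hw
    rw [LinearMap.mem_ker] at hw ⊢
    have hw' : f w = c • w := by
      have := hw
      simpa [sub_eq_zero] using this
    simp [hf g w, hw', map_smul, sub_eq_zero]
  have hne : LinearMap.ker (f - c • LinearMap.id) ≠ ⊥ := by
    intro hbot
    have hv1 : v ∈ LinearMap.ker (f - c • LinearMap.id) := by
      rw [LinearMap.mem_ker]
      have := hv.apply_eq_smul
      simp [this, sub_eq_zero]
    rw [hbot, Submodule.mem_bot] at hv1
    exact hv.2 hv1
  have := (hirr.2 _ hker).resolve_left hne
  ext w
  have hw : w ∈ LinearMap.ker (f - c • LinearMap.id) := this ▸ Submodule.mem_top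
  rw [LinearMap.mem_ker] at hw
  have : f w - c • w = 0 := by simpa using hw
  simpa [sub_eq_zero] using this

/-- an irreducible representation gives a simple object of `FDRep`. -/
theorem simple_of_irred [FiniteDimensional ℂ V] (ρ : Representation ℂ G V) (hirr : Irred ρ) :
    Simple (FDRep.of ρ) := by
  haveI := hirr.1
  constructor
  intro Y f hmono
  constructor
  · intro hiso h0
    obtain ⟨v, hv⟩ := exists_ne (0 : V)
    have h1 : 𝟙 (FDRep.of ρ) = (0 : FDRep.of ρ ⟶ FDRep.of ρ) := by
      calc 𝟙 (FDRep.of ρ) = inv f ≫ f := (IsIso.inv_hom_id f).symm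
        _ = inv f ≫ 0 := congrArg (fun φ => inv f ≫ φ) h0
        _ = 0 := Limits.comp_zero
    have h2 := congrArg (fun (φ : FDRep.of ρ ⟶ FDRep.of ρ) => φ.hom v) h1
    simp only [Action.zero_hom, Action.id_hom] at h2
    exact hv (by exact h2)
  · intro hne
    let F : (↥Y.V →ₗ[ℂ] V) := f.hom.hom.hom
    let ρY : Representation ℂ G ↥Y.V := Y.ρ
    have hcomm : ∀ (g : G) (y : ↥Y.V), F (ρY g y) = ρ g (F y) := by
      intro g y
      exact congrArg (fun φ => φ.hom.hom y) (f.comm g)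
    have hK : IsInvt ρY (LinearMap.ker F) := by
      intro g y hy
      rw [LinearMap.mem_ker] at hy ⊢
      rw [hcomm, hy, map_zero]
    have hinj : Function.Injective F := by
      rw [← LinearMap.ker_eq_bot]
      by_contra hKne
      let Z := FDRep.of (resRep ρY (LinearMap.ker F) hK)
      let ι : Z ⟶ Y := ⟨FGModuleCat.ofHom ((LinearMap.ker F).subtype : _ →ₗ[ℂ] _), fun g => rfl⟩
      have hcompzero : ι ≫ f = (0 : Z ⟶ Y) ≫ f := by
        rw [Limits.zero_comp]
        apply Action.hom_ext
        apply ObjectProperty.hom_ext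
        apply ModuleCat.hom_ext
        apply LinearMap.ext
        intro x
        exact x.2
      have hι0 : ι = 0 := (cancel_mono f).1 hcompzero
      apply hKne
      rw [eq_bot_iff]
      intro x hx
      have := congrArg (fun (φ : Z ⟶ Y) => φ.hom.hom.hom ⟨x, hx⟩) hι0
      simp only [Action.zero_hom] at this
      exact this
    have hR : IsInvt ρ (LinearMap.range F) := by
      rintro g v ⟨y, rfl⟩
      exact ⟨ρY g y, (hcomm g y)⟩
    have hFne : LinearMap.range F ≠ ⊥ := by
      intro hbot
      apply hne
      apply Action.hom_ext
      apply ObjectProperty.hom_ext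
      apply ModuleCat.hom_ext
      apply LinearMap.ext
      intro y
      have : F y ∈ LinearMap.range F := ⟨y, rfl⟩
      rw [hbot, Submodule.mem_bot] at this
      exact this
    have hsurj : Function.Surjective F := by
      rw [← LinearMap.range_eq_top]
      exact (hirr.2 _ hR).resolve_left hFne
    let e : (↥Y.V ≃ₗ[ℂ] V) := LinearEquiv.ofBijective F ⟨hinj, hsurj⟩
    have hiso : IsIso f.hom := by
      have : f.hom = (LinearEquiv.toFGModuleCatIso (W := (FDRep.of ρ).V) e).hom := rfl
      rw [this]
      infer_instance
    infer_instance

theorem smul_id_pow (c : ℂ) (k : ℕ) {W : Type} [AddCommGroup W] [Module ℂ W] :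
    (c • (LinearMap.id : W →ₗ[ℂ] W)) ^ k = c ^ k • LinearMap.id := by
  rw [← Module.End.one_eq_id, smul_pow, one_pow]

/-- scalar action predicate: `c` arises as the scalar by which some finite dimensional
nontrivial representation acts at `z`. -/
def ScalarP (G : Type) [Group G] (z : G) (c : ℂ) : Prop :=
  ∃ (W : Type) (_ : AddCommGroup W) (_ : Module ℂ W) (_ : FiniteDimensional ℂ W)
    (_ : Nontrivial W) (ρ : Representation ℂ G W), ρ z = c • LinearMap.id

/-- separation: if a central power is nontrivial, some scalar witnesses it. -/
theorem sep_lemma {G : Type} [Group G] [Fintype G] (ζ0 : G) (hζc : ζ0 ∈ Subgroup.center G)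
    (k : ℕ) (hzk : ζ0 ^ k ≠ 1) : ∃ c : ℂ, ScalarP G ζ0 c ∧ c ^ k ≠ 1 := by
  classical
  set z := ζ0 ^ k with hz
  have hzc : z ∈ Subgroup.center G := Subgroup.pow_mem _ hζc k
  let R : Representation ℂ G (MonoidAlgebra ℂ G) := Representation.ofMulAction ℂ G G
  have hcomm : ∀ (w : G), w ∈ Subgroup.center G → ∀ (g : G) (v : MonoidAlgebra ℂ G),
      R w (R g v) = R g (R w v) := by
    intro w hw g v
    rw [← Module.End.mul_apply, ← map_mul, ← (Subgroup.mem_center_iff.1 hw g), map_mul,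
      Module.End.mul_apply]
  set T := LinearMap.ker (R z - LinearMap.id) with hT
  have hTinv : IsInvt R T := by
    intro g v hv
    rw [hT, LinearMap.mem_ker] at hv ⊢
    have hv' : R z v = v := by simpa [sub_eq_zero] using hv
    simp [LinearMap.sub_apply, hcomm z hzc g v, hv', sub_eq_zero]
  have hTne : T ≠ ⊤ := by
    intro htop
    have h1 : MonoidAlgebra.single (1 : G) (1 : ℂ) ∈ T := htop ▸ Submodule.mem_top
    rw [hT, LinearMap.mem_ker] at h1
    have h2 : R z (MonoidAlgebra.single (1 : G) (1 : ℂ)) = MonoidAlgebra.single (1 : G) (1 : ℂ) := by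
      have := h1
      simpa [sub_eq_zero] using this
    rw [show R z (MonoidAlgebra.single (1 : G) (1 : ℂ)) = MonoidAlgebra.single z (1 : ℂ) by
      rw [Representation.ofMulAction_single]; simp] at h2
    exact hzk ((MonoidAlgebra.single_left_inj one_ne_zero).1 h2)
  obtain ⟨q, hqinv, hq1, hq2⟩ := maschke_invt R T hTinv
  have hq0 : q ≠ ⊥ := by
    intro hbot
    rw [hbot, sup_bot_eq] at hq2
    exact hTne hq2
  obtain ⟨S, hSI, hSq, hS0, hirr⟩ := exists_irred_sub R q hqinv hq0
  set ρS := resRep R S hSI with hρS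
  have hcommS : ∀ (g : G) (v : ↥S), (ρS ζ0) (ρS g v) = ρS g (ρS ζ0 v) := by
    intro g v
    rw [← Module.End.mul_apply, ← map_mul, ← (Subgroup.mem_center_iff.1 hζc g), map_mul,
      Module.End.mul_apply]
  obtain ⟨c, hc⟩ := schur_scalar ρS hirr (ρS ζ0) hcommS
  have hck : c ^ k ≠ 1 := by
    intro hck1
    have h1 : ρS z = LinearMap.id := by
      rw [hz, map_pow, hc]
      have hh := smul_id_pow c k (W := ↥S)
      rw [hh, hck1, one_smul]
    have hST : S ≤ T := by
      intro v hv
      rw [hT, LinearMap.mem_ker]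
      have h2 : R z v = v := by
        have h3 : (ρS z ⟨v, hv⟩ : MonoidAlgebra ℂ G) = R z v := resRep_apply R S hSI z ⟨v, hv⟩
        rw [h1] at h3
        exact h3.symm
      simp [h2, sub_eq_zero]
    have : S ≤ ⊥ := hq1 ▸ le_inf hST hSq
    exact hS0 (le_bot_iff.1 this)
  exact ⟨c, ⟨↥S, inferInstance, inferInstance, inferInstance,
    Submodule.nontrivial_iff_ne_bot.2 hS0, ρS, hc⟩, hck⟩

end RepAux


theorem orderOf_prod_coprime {ι M : Type*} [CommMonoid M] (s : Finset ι) (f : ι → M)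
    (h : (s : Set ι).Pairwise fun i j => Nat.Coprime (orderOf (f i)) (orderOf (f j))) :
    orderOf (∏ i ∈ s, f i) = ∏ i ∈ s, orderOf (f i) := by
  classical
  induction s using Finset.cons_induction with
  | empty => simp
  | cons a s ha ih =>
    rw [Finset.prod_cons, Finset.prod_cons]
    have hpair : (s : Set ι).Pairwise fun i j => Nat.Coprime (orderOf (f i)) (orderOf (f j)) :=
      h.mono (by simp only [Finset.coe_cons]; exact Set.subset_insert _ _)
    have hco : Nat.Coprime (orderOf (f a)) (orderOf (∏ i ∈ s, f i)) := by
      rw [ih hpair]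
      apply Nat.Coprime.prod_right
      intro i hi
      exact h (by simp) (by simp [hi]) (by rintro rfl; exact ha hi)
    rw [(Commute.all _ _).orderOf_mul_eq_mul_orderOf_of_coprime hco, ih hpair]

/-- key abstract lemma: a multiplicatively closed predicate whose elements are `n`-th roots of
unity and which separates divisors contains an element of order `n`. -/
theorem exists_orderOf_eq_of_sep {M : Type*} [CommMonoid M] (P : M → Prop)
    (hP1 : P 1) (hPmul : ∀ a b, P a → P b → P (a * b)) (n : ℕ) (hn : 0 < n)
    (hord : ∀ c, P c → c ^ n = 1) (hsep : ∀ k, ¬ n ∣ k → ∃ c, P c ∧ c ^ k ≠ 1) :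
    ∃ ζ, P ζ ∧ orderOf ζ = n := by
  classical
  have hPpow : ∀ c, P c → ∀ m : ℕ, P (c ^ m) := by
    intro c hc m
    induction m with
    | zero => simpa using hP1
    | succ m ih => rw [pow_succ]; exact hPmul _ _ ih hc
  -- for each prime p in the factorization, get an element of order p ^ (n.factorization p)
  have key : ∀ p ∈ n.factorization.support, ∃ c, P c ∧ orderOf c = p ^ n.factorization p := by
    intro p hp
    have hpprime : p.Prime := Nat.prime_of_mem_primeFactors hp
    have hpdvd : p ∣ n := Nat.dvd_of_mem_primeFactors hp
    have hndvd : ¬ n ∣ n / p := by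
      intro hdvd
      have h1 : n / p < n := Nat.div_lt_self hn hpprime.one_lt
      have h2 : 0 < n / p := Nat.div_pos (Nat.le_of_dvd hn hpdvd) hpprime.pos
      exact absurd (Nat.le_of_dvd h2 hdvd) (by omega)
    obtain ⟨c, hc, hck⟩ := hsep (n / p) hndvd
    have hd : orderOf c ∣ n := orderOf_dvd_of_pow_eq_one (hord c hc)
    have hd0 : orderOf c ≠ 0 := fun h => by rw [h] at hd; omega
    have hdnd : ¬ orderOf c ∣ n / p := fun h => hck (orderOf_dvd_iff_pow_eq_one.1 h)
    set a := n.factorization p with ha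
    -- p ^ a ∣ orderOf c
    have hpa : p ^ a ∣ orderOf c := by
      by_contra hnpa
      apply hdnd
      have hnp0 : n / p ≠ 0 := by
        have := Nat.div_pos (Nat.le_of_dvd hn hpdvd) hpprime.pos; omega
      rw [← Nat.factorization_le_iff_dvd hd0 hnp0]
      intro q
      have hq : (n / p).factorization q = n.factorization q - (Nat.factorization p) q := by
        rw [Nat.factorization_div hpdvd]
        rfl
      rw [hq, hpprime.factorization]
      by_cases hqp : q = p
      · subst hqp
        have h1 : (orderOf c).factorization q < a := by
          by_contra hge
          exact hnpa ((Nat.Prime.pow_dvd_iff_le_factorization hpprime hd0).2 (by omega))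
        simp only [Finsupp.single_eq_same]
        omega
      · have h2 : (orderOf c).factorization q ≤ n.factorization q :=
          (Nat.factorization_le_iff_dvd hd0 (by omega)).2 hd q
        simp [Finsupp.single_eq_of_ne hqp, h2]
    -- now take the right power
    obtain ⟨m, hm⟩ := hpa
    refine ⟨c ^ m, hPpow c hc m, ?_⟩
    have hm0 : m ≠ 0 := by rintro rfl; simp at hm; exact hd0 (orderOf_eq_zero_iff.2 hm)
    have hmdvd : m ∣ orderOf c := ⟨p ^ a, by rw [hm]; ring⟩
    rw [orderOf_pow' c hm0, Nat.gcd_comm, Nat.gcd_eq_left hmdvd, hm,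
      Nat.mul_div_cancel _ (Nat.pos_of_ne_zero hm0)]
  choose cf hcf using key
  refine ⟨∏ p ∈ n.factorization.support.attach, cf p p.2, ?_, ?_⟩
  · apply Finset.prod_induction _ P hPmul hP1
    intro p _
    exact (hcf p p.2).1
  · rw [orderOf_prod_coprime]
    · calc ∏ p ∈ n.factorization.support.attach, orderOf (cf p p.2)
          = ∏ p ∈ n.factorization.support.attach, (p : ℕ) ^ n.factorization p :=
            Finset.prod_congr rfl (fun p _ => (hcf p p.2).2)
        _ = ∏ p ∈ n.factorization.support, p ^ n.factorization p := Finset.prod_attach n.factorization.support (fun p => p ^ n.factorization p)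
        _ = n := Nat.factorization_prod_pow_eq_self hn.ne'
    · intro i _ j _ hij
      rw [(hcf i i.2).2, (hcf j j.2).2]
      apply Nat.Coprime.pow
      rw [Nat.coprime_primes (Nat.prime_of_mem_primeFactors i.2) (Nat.prime_of_mem_primeFactors j.2)]
      exact fun h => hij (Subtype.ext h)


/-- a finite nilpotent group with cyclic center has a faithful irreducible
complex character. -/
theorem exists_faithful_irreducible_char_of_nilpotent_cyclic_center
    {G : Type} [Group G] [Fintype G] (hnil : Group.IsNilpotent G)
    (hcyc : IsCyclic (Subgroup.center G)) :
    ∃ V : FDRep ℂ G, Simple V ∧ Function.Injective (fun g : G => V.ρ g) := by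
  classical
  obtain ⟨z0', hz0'⟩ := hcyc.exists_generator
  set ζ0 : G := (z0' : G) with hζ0def
  have hζ0c : ζ0 ∈ Subgroup.center G := z0'.2
  set n := orderOf ζ0 with hn
  have hn0 : 0 < n := orderOf_pos ζ0
  set P : ℂ → Prop := ScalarP G ζ0 with hP
  have hP1 : P 1 := by
    refine ⟨ℂ, inferInstance, inferInstance, inferInstance, inferInstance,
      (1 : G →* (ℂ →ₗ[ℂ] ℂ)), ?_⟩
    rw [MonoidHom.one_apply, one_smul, Module.End.one_eq_id]
  have hPmul : ∀ a b, P a → P b → P (a * b) := by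
    rintro a b ⟨W1, _, _, _, _, ρ1, h1⟩ ⟨W2, _, _, _, _, ρ2, h2⟩
    have hnt : Nontrivial (TensorProduct ℂ W1 W2) := by
      have h := Module.finrank_tensorProduct (R := ℂ) (S := ℂ) (M := W1) (M' := W2)
      have h1' : 0 < finrank ℂ W1 := finrank_pos
      have h2' : 0 < finrank ℂ W2 := finrank_pos
      have : 0 < finrank ℂ (TensorProduct ℂ W1 W2) := by rw [h]; positivity
      exact Module.nontrivial_of_finrank_pos this
    refine ⟨TensorProduct ℂ W1 W2, inferInstance, inferInstance, inferInstance, hnt,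
      Representation.tprod ρ1 ρ2, ?_⟩
    rw [Representation.tprod_apply, h1, h2]
    apply TensorProduct.ext'
    intro x y
    simp [TensorProduct.smul_tmul', TensorProduct.tmul_smul, smul_smul, mul_comm]
  have hord : ∀ c, P c → c ^ n = 1 := by
    rintro c ⟨W, _, _, _, _, ρ, hρ⟩
    have h1 : ρ (ζ0 ^ n) = 1 := by rw [hn, pow_orderOf_eq_one, map_one]
    rw [map_pow, hρ] at h1
    have hh := smul_id_pow c n (W := W)
    rw [hh] at h1
    obtain ⟨w, hw⟩ := exists_ne (0 : W)
    have h2 := LinearMap.congr_fun h1 w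
    simp only [LinearMap.smul_apply, LinearMap.id_apply, Module.End.one_apply] at h2
    have h3 : (c ^ n - 1) • w = 0 := by rw [sub_smul, one_smul, h2, sub_self]
    rcases smul_eq_zero.1 h3 with h | h
    · exact sub_eq_zero.1 h
    · exact absurd h hw
  have hsep : ∀ k, ¬ n ∣ k → ∃ c, P c ∧ c ^ k ≠ 1 := by
    intro k hk
    exact sep_lemma ζ0 hζ0c k (fun h => hk (hn ▸ orderOf_dvd_of_pow_eq_one h))
  obtain ⟨ζ, hPζ, hζord⟩ := exists_orderOf_eq_of_sep P hP1 hPmul n hn0 hord hsep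
  obtain ⟨W, _, _, _, hWnt, ρ, hρ⟩ := hPζ
  obtain ⟨S, hSI, -, hS0, hirr⟩ :=
    exists_irred_sub ρ ⊤ (fun g v _ => Submodule.mem_top) (by
      intro h
      obtain ⟨w, hw⟩ := exists_ne (0 : W)
      have : w ∈ (⊤ : Submodule ℂ W) := Submodule.mem_top
      rw [h, Submodule.mem_bot] at this
      exact hw this)
  set ρS := resRep ρ S hSI with hρSdef
  have hρS : ρS ζ0 = ζ • LinearMap.id := by
    apply LinearMap.ext
    intro x
    apply Subtype.ext
    have h1 : ((ρS ζ0 x : ↥S) : W) = ρ ζ0 (x : W) := resRep_apply ρ S hSI ζ0 x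
    rw [h1, hρ]
    rfl
  refine ⟨FDRep.of ρS, simple_of_irred ρS hirr, ?_⟩
  have hker : ∀ g : G, ρS g = 1 → g = 1 := by
    by_contra h
    push_neg at h
    obtain ⟨g0, hg1, hg2⟩ := h
    let K : Subgroup G :=
      { carrier := {g | ρS g = 1}
        one_mem' := map_one ρS
        mul_mem' := by
          intro a b ha hb
          simp only [Set.mem_setOf_eq] at ha hb ⊢
          rw [map_mul, ha, hb, mul_one]
        inv_mem' := by
          intro a ha
          simp only [Set.mem_setOf_eq] at ha ⊢
          have : ρS a⁻¹ * ρS a = 1 := by rw [← map_mul, inv_mul_cancel, map_one]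
          rwa [ha, mul_one] at this }
    have hnorm : K.Normal := by
      constructor
      intro x hx g'
      show ρS (g' * x * g'⁻¹) = 1
      have hx' : ρS x = 1 := hx
      rw [map_mul, map_mul, hx', mul_one, ← map_mul, mul_inv_cancel, map_one]
    have hKne : K ≠ ⊥ := by
      intro hbot
      have : g0 ∈ K := hg1
      rw [hbot, Subgroup.mem_bot] at this
      exact hg2 this
    obtain ⟨x, hxK, hxc, hx1⟩ := aux_meets_center hnil K hnorm hKne
    have hx2 : (⟨x, hxc⟩ : Subgroup.center G) ∈ Subgroup.zpowers z0' := hz0' ⟨x, hxc⟩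
    have hfin : IsOfFinOrder z0' := isOfFinOrder_of_finite z0'
    rw [← hfin.mem_powers_iff_mem_zpowers] at hx2
    obtain ⟨m, hm⟩ := hx2
    have hm2 : z0' ^ m = ⟨x, hxc⟩ := hm
    have hm' : ζ0 ^ m = x := by
      have := congrArg Subtype.val hm2
      simpa using this
    have h1 : ρS x = ζ ^ m • LinearMap.id := by
      rw [← hm', map_pow, hρS]
      exact smul_id_pow ζ m (W := ↥S)
    have hx' : ρS x = 1 := hxK
    have h2 : (ζ ^ m) • (LinearMap.id : ↥S →ₗ[ℂ] ↥S) = 1 := by rw [← h1]; exact hx'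
    haveI := hirr.1
    obtain ⟨v, hv⟩ := exists_ne (0 : ↥S)
    have h3 := LinearMap.congr_fun h2 v
    simp only [LinearMap.smul_apply, LinearMap.id_apply, Module.End.one_apply] at h3
    have h4 : ζ ^ m = 1 := by
      by_contra hne
      have h5 : (ζ ^ m - 1) • v = 0 := by rw [sub_smul, one_smul, h3, sub_self]
      rcases smul_eq_zero.1 h5 with h | h
      · exact hne (sub_eq_zero.1 h)
      · exact hv h
    have h5 : n ∣ m := hζord ▸ orderOf_dvd_of_pow_eq_one h4
    rw [hn] at h5
    have h6 : ζ0 ^ m = 1 := orderOf_dvd_iff_pow_eq_one.1 h5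
    exact hx1 (by rw [← hm', h6])
  intro a b hab
  have hab' : ρS a = ρS b := by
    have h : (FDRep.of ρS).ρ a = (FDRep.of ρS).ρ b := hab
    exact h
  have hone : ρS (a * b⁻¹) = 1 := by
    rw [map_mul, hab', ← map_mul, mul_inv_cancel, map_one]
  have := hker _ hone
  rwa [mul_inv_eq_one] at this
end
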